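/- Let {M_ω}_{ω ∈ Λ} be a family of left R-modules indexed by a nonempty set Λ. Then the direct sum ⨁_{ω ∈ Λ} M_ω has a proper essential submodule if and only if some M_ω has a proper essential submodule. -/

import Mathlib

/-- `E` is a proper essential submodule of `M`: a proper nontrivial submodule that
intersects every nonzero submodule nontrivially. -/
def IsProperEssential {R M : Type*} [Ring R] [AddCommGroup M] [Module R M]
    (E : Submodule R M) : Prop :=
  E ≠ ⊥ ∧ E ≠ ⊤ ∧ ∀ N : Submodule R M, N ≠ ⊥ → E ⊓ N ≠ ⊥

open DirectSum

/-- A direct sum of modules has a proper essential submodule iff one of the factors does. -/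
theorem directSum_properEssential_iff {R : Type*} [Ring R] {ι : Type*} [Nonempty ι]
    [DecidableEq ι] (M : ι → Type*) [∀ i, AddCommGroup (M i)] [∀ i, Module R (M i)] :
    (∃ E : Submodule R (⨁ i, M i), IsProperEssential E) ↔
      ∃ i, ∃ E : Submodule R (M i), IsProperEssential E := by
  constructor
  · rintro ⟨E, hEbot, hEtop, hEess⟩
    by_contra h
    push_neg at h
    apply hEtop
    rw [eq_top_iff]
    intro x _
    induction x using DirectSum.induction_on with
    | zero => exact E.zero_mem
    | add x y hx hy => exact E.add_mem (hx trivial) (hy trivial)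
    | of i m =>
      set Ei := E.comap (DirectSum.lof R ι M i) with hEi
      have hess : ∀ N : Submodule R (M i), N ≠ ⊥ → Ei ⊓ N ≠ ⊥ := by
        intro N hN hcon
        obtain ⟨n, hnN, hn0⟩ := Submodule.ne_bot_iff N |>.1 hN
        have hmap : N.map (DirectSum.lof R ι M i) ≠ ⊥ := by
          intro hb
          have : DirectSum.lof R ι M i n = 0 := by
            have : DirectSum.lof R ι M i n ∈ N.map (DirectSum.lof R ι M i) :=
              ⟨n, hnN, rfl⟩
            simpa [hb] using this
          exact hn0 (by simpa using DirectSum.of_injective i (by simpa [DirectSum.lof_eq_of] using this))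
        obtain ⟨z, ⟨hzE, hzN⟩, hz0⟩ := Submodule.ne_bot_iff _ |>.1 (hEess _ hmap)
        obtain ⟨w, hwN, rfl⟩ := hzN
        have hw0 : w ≠ 0 := fun hw => hz0 (by simp [hw])
        have : w ∈ Ei ⊓ N := ⟨hzE, hwN⟩
        rw [hcon] at this
        exact hw0 (by simpa using this)
      by_cases htriv : (⊤ : Submodule R (M i)) = ⊥
      · have : m = 0 := by
          have : m ∈ (⊤ : Submodule R (M i)) := trivial
          rw [htriv] at this; simpa using this
        simp [this]
      · have hb : Ei ≠ ⊥ := by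
          intro hb
          exact hess ⊤ htriv (by simp [hb])
        have : Ei = ⊤ := by
          by_contra ht
          exact h i Ei ⟨hb, ht, hess⟩
        have hm : m ∈ Ei := this ▸ trivial
        simpa [hEi, DirectSum.lof_eq_of] using hm
  · rintro ⟨i, Ei, hb, ht, hess⟩
    refine ⟨Ei.comap (DirectSum.component R ι M i), ?_, ?_, ?_⟩
    · obtain ⟨m, hm, hm0⟩ := Submodule.ne_bot_iff Ei |>.1 hb
      rw [Submodule.ne_bot_iff]
      refine ⟨DirectSum.lof R ι M i m, ?_, ?_⟩
      · simpa [Submodule.mem_comap, DirectSum.component.lof_self] using hm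
      · intro hc
        exact hm0 (DirectSum.of_injective i (by simpa [DirectSum.lof_eq_of] using hc))
    · intro hc
      apply ht
      rw [eq_top_iff]
      intro m _
      have : DirectSum.lof R ι M i m ∈ Ei.comap (DirectSum.component R ι M i) := by
        rw [hc]; trivial
      simpa [Submodule.mem_comap, DirectSum.component.lof_self] using this
    · intro N hN
      obtain ⟨x, hxN, hx0⟩ := Submodule.ne_bot_iff N |>.1 hN
      rw [Submodule.ne_bot_iff]
      by_cases hxi : DirectSum.component R ι M i x = 0
      · exact ⟨x, ⟨by simp [Submodule.mem_comap, hxi], hxN⟩, hx0⟩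
      · have hspan : (Submodule.span R {DirectSum.component R ι M i x}) ≠ ⊥ := by
          simp [Submodule.span_singleton_eq_bot, hxi]
        obtain ⟨y, ⟨hyE, hyS⟩, hy0⟩ := Submodule.ne_bot_iff _ |>.1 (hess _ hspan)
        obtain ⟨r, rfl⟩ := Submodule.mem_span_singleton.1 hyS
        refine ⟨r • x, ⟨?_, N.smul_mem r hxN⟩, ?_⟩
        · simpa [Submodule.mem_comap, map_smul] using hyE
        · intro hc
          apply hy0
          have : DirectSum.component R ι M i (r • x) = 0 := by rw [hc]; simp
          simpa [map_smul] using this
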